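/- Under the replicability setup with the directional FWER replicability procedure at level α ∈ (0,1), for every feature j with H_j ∈ {(1,0),(−1,0)} such that P_{2j}^L is independent of the vector of primary-study p-values (P_{11}^L,…,P_{1m}^L), it holds that E(R_j^L + R_j^R) ≤ c₂α·E[ 1{j ∈ R₁}/|R₁| ] + (c₁(α)α/m)·c₂α. -/

import Mathlib

open MeasureTheory ProbabilityTheory Set

section Replicability

variable {Ω : Type} {m : ℕ}

/-- `c₁(x) = (1−c₂)/(1 − l₀₀(1 − c₂x))`. -/
noncomputable def c1 (l00 c2 x : ℝ) : ℝ := (1 - c2) / (1 - l00 * (1 - c2 * x))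

/-- The primary-study one-sided p-value in the direction favoured by the primary study:
`p'₁ⱼ = min(P₁ⱼᴸ, P₁ⱼᴿ)` where `P₁ⱼᴿ = 1 − P₁ⱼᴸ`. -/
noncomputable def p1' (P1L : Fin m → Ω → ℝ) (j : Fin m) (ω : Ω) : ℝ :=
  min (P1L j ω) (1 - P1L j ω)

/-- The follow-up study one-sided p-value in the direction favoured by the primary study:
`p'₂ⱼ = P₂ⱼᴸ` if `P₁ⱼᴸ < P₁ⱼᴿ` and `p'₂ⱼ = P₂ⱼᴿ = 1 − P₂ⱼᴸ` otherwise. -/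
noncomputable def p2' (P1L P2L : Fin m → Ω → ℝ) (j : Fin m) (ω : Ω) : ℝ :=
  if P1L j ω < 1 - P1L j ω then P2L j ω else 1 - P2L j ω

/-- The set `R₁` of features selected for follow-up, a function of the primary-study
left-sided p-values. -/
def R1set (sel : (Fin m → ℝ) → Finset (Fin m)) (P1L : Fin m → Ω → ℝ) (ω : Ω) :
    Finset (Fin m) := sel (fun i => P1L i ω)

/-- A replicability claim is made for feature `j` if `j` is selected, `p'₁ⱼ ≤ a`
and `p'₂ⱼ ≤ b/|R₁|`. -/
def Claim (sel : (Fin m → ℝ) → Finset (Fin m)) (P1L P2L : Fin m → Ω → ℝ)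
    (a b : ℝ) (j : Fin m) (ω : Ω) : Prop :=
  j ∈ R1set sel P1L ω ∧ p1' P1L j ω ≤ a ∧
    p2' P1L P2L j ω ≤ b / ((R1set sel P1L ω).card : ℝ)

open Classical in
/-- Indicator of a left-direction replicability claim for feature `j`. -/
noncomputable def RjL (sel : (Fin m → ℝ) → Finset (Fin m)) (P1L P2L : Fin m → Ω → ℝ)
    (a b : ℝ) (j : Fin m) (ω : Ω) : ℕ :=
  if Claim sel P1L P2L a b j ω ∧ P1L j ω < 1 - P1L j ω then 1 else 0

open Classical in
/-- Indicator of a right-direction replicability claim for feature `j`. -/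
noncomputable def RjR (sel : (Fin m → ℝ) → Finset (Fin m)) (P1L P2L : Fin m → Ω → ℝ)
    (a b : ℝ) (j : Fin m) (ω : Ω) : ℕ :=
  if Claim sel P1L P2L a b j ω ∧ ¬ (P1L j ω < 1 - P1L j ω) then 1 else 0

/-- `R`, the total number of replicability claims. -/
noncomputable def Rtot (sel : (Fin m → ℝ) → Finset (Fin m)) (P1L P2L : Fin m → Ω → ℝ)
    (a b : ℝ) (ω : Ω) : ℕ :=
  ∑ j : Fin m, (RjL sel P1L P2L a b j ω + RjR sel P1L P2L a b j ω)

/-- `S`, the number of true directional replicability claims. -/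
noncomputable def Stot (H1 H2 : Fin m → ℤ) (sel : (Fin m → ℝ) → Finset (Fin m))
    (P1L P2L : Fin m → Ω → ℝ) (a b : ℝ) (ω : Ω) : ℕ :=
  ∑ j ∈ Finset.univ.filter (fun j => H1 j = 1 ∧ H2 j = 1), RjR sel P1L P2L a b j ω +
  ∑ j ∈ Finset.univ.filter (fun j => H1 j = -1 ∧ H2 j = -1), RjL sel P1L P2L a b j ω

end Replicability

open scoped ENNReal NNReal

lemma unif_upper_tail {Ω : Type} [MeasureSpace Ω] [IsProbabilityMeasure (ℙ : Measure Ω)]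
    (X : Ω → ℝ) (hX : Measurable X)
    (unif : ∀ t ∈ Icc (0:ℝ) 1, ℙ {ω | X ω ≤ t} = ENNReal.ofReal t)
    (t : ℝ) (ht : t ∈ Icc (0:ℝ) 1) :
    ℙ {ω | 1 - t ≤ X ω} ≤ ENNReal.ofReal t := by
  rcases eq_or_lt_of_le ht.2 with h1 | h1
  · subst h1
    simpa [ENNReal.ofReal_one] using prob_le_one (μ := (ℙ : Measure Ω)) (s := {ω | 1 - 1 ≤ X ω})
  · apply ENNReal.le_of_forall_pos_le_add
    intro ε hε _
    set δ : ℝ := min (ε : ℝ) (1 - t) with hδ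
    have hδpos : 0 < δ := lt_min (by exact_mod_cast hε) (by linarith)
    have hδle : δ ≤ 1 - t := min_le_right _ _
    have hmem : 1 - t - δ ∈ Icc (0:ℝ) 1 := ⟨by linarith, by linarith [ht.1]⟩
    have hA := unif _ hmem
    have hdisj : Disjoint {ω | X ω ≤ 1 - t - δ} {ω | 1 - t ≤ X ω} := by
      rw [Set.disjoint_left]
      intro ω h1' h2'
      simp only [mem_setOf_eq] at h1' h2'
      linarith
    have hmeasA : MeasurableSet {ω | X ω ≤ 1 - t - δ} := measurableSet_le hX measurable_const
    have key : ℙ {ω | X ω ≤ 1 - t - δ} + ℙ {ω | 1 - t ≤ X ω} ≤ 1 := by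
      rw [← measure_union hdisj (measurableSet_le measurable_const hX)]
      exact prob_le_one
    have hone : (1 : ℝ≥0∞) = ENNReal.ofReal (1 - t - δ) + ENNReal.ofReal (t + δ) := by
      rw [← ENNReal.ofReal_add (by linarith) (by have := ht.1; linarith)]
      norm_num
    rw [hA, hone] at key
    have := (ENNReal.add_le_add_iff_left ENNReal.ofReal_ne_top).mp key
    refine this.trans ?_
    rw [ENNReal.ofReal_add ht.1 hδpos.le]
    gcongr
    calc ENNReal.ofReal δ ≤ ENNReal.ofReal (ε : ℝ) := ENNReal.ofReal_le_ofReal (min_le_left _ _)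
      _ = (ε : ℝ≥0∞) := ENNReal.ofReal_coe_nnreal

/-- For a feature `j` with `H_j ∈ {(1,0),(−1,0)}` whose follow-up p-value is independent
of the primary-study p-values, the expected number of replicability claims of the
level-`α` directional FWER replicability procedure is at most
`c₂α·E[1{j ∈ R₁}/|R₁|] + (c₁(α)α/m)·c₂α`. -/
theorem stmt12
    {Ω : Type} [MeasureSpace Ω] [IsProbabilityMeasure (ℙ : Measure Ω)]
    -- the number of features
    (m : ℕ) (hm : 1 ≤ m)
    -- the hypothesis configuration H_j = (H1 j, H2 j) ∈ {-1,0,1}²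
    (H1 H2 : Fin m → ℤ)
    (hH1 : ∀ j, H1 j = -1 ∨ H1 j = 0 ∨ H1 j = 1)
    (hH2 : ∀ j, H2 j = -1 ∨ H2 j = 0 ∨ H2 j = 1)
    -- the left-sided p-values of the two studies (the right-sided ones are 1 - P1L, 1 - P2L)
    (P1L P2L : Fin m → Ω → ℝ)
    (measP1 : ∀ j, Measurable (P1L j)) (measP2 : ∀ j, Measurable (P2L j))
    (range1 : ∀ j ω, P1L j ω ∈ Icc (0:ℝ) 1) (range2 : ∀ j ω, P2L j ω ∈ Icc (0:ℝ) 1)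
    (neHalf : ∀ j, ∀ᵐ ω ∂ℙ, P1L j ω ≠ 1/2)
    -- null p-values are uniform
    (unif1 : ∀ j, H1 j = 0 → ∀ t ∈ Icc (0:ℝ) 1, ℙ {ω | P1L j ω ≤ t} = ENNReal.ofReal t)
    (unif2 : ∀ j, H2 j = 0 → ∀ t ∈ Icc (0:ℝ) 1, ℙ {ω | P2L j ω ≤ t} = ENNReal.ofReal t)
    -- under a true right-sided (resp. left-sided) alternative, the left-sided (resp.
    -- right-sided) p-value is stochastically larger than or equal to uniform
    (stoch1R : ∀ j, H1 j = 1 → ∀ t ∈ Icc (0:ℝ) 1, ℙ {ω | P1L j ω ≤ t} ≤ ENNReal.ofReal t)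
    (stoch2R : ∀ j, H2 j = 1 → ∀ t ∈ Icc (0:ℝ) 1, ℙ {ω | P2L j ω ≤ t} ≤ ENNReal.ofReal t)
    (stoch1L : ∀ j, H1 j = -1 →
      ∀ t ∈ Icc (0:ℝ) 1, ℙ {ω | 1 - P1L j ω ≤ t} ≤ ENNReal.ofReal t)
    (stoch2L : ∀ j, H2 j = -1 →
      ∀ t ∈ Icc (0:ℝ) 1, ℙ {ω | 1 - P2L j ω ≤ t} ≤ ENNReal.ofReal t)
    -- the selection rule: a measurable, nonempty-set-valued function of the primary p-values
    (sel : (Fin m → ℝ) → Finset (Fin m))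
    (selMeas : @Measurable (Fin m → ℝ) (Finset (Fin m)) _ ⊤ sel)
    (selNonempty : ∀ p, (sel p).Nonempty)
    -- the parameters l₀₀ ∈ [0,1) and c₂ ∈ (0,1)
    (l00 c2 : ℝ) (hl00 : l00 ∈ Ico (0:ℝ) 1) (hc2 : c2 ∈ Ioo (0:ℝ) 1)
    -- the level of the procedure
    (α : ℝ) (hα : α ∈ Ioo (0:ℝ) 1)
    -- a feature with H_j ∈ {(1,0),(−1,0)} whose follow-up p-value is independent of the
    -- vector of primary-study p-values
    (j : Fin m) (hj : (H1 j = 1 ∨ H1 j = -1) ∧ H2 j = 0)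
    (indep : IndepFun (P2L j) (fun ω => fun i => P1L i ω) ℙ) :
    ∫ ω, ((RjL sel P1L P2L (c1 l00 c2 α * α / (m : ℝ)) (c2 * α) j ω : ℝ) +
        (RjR sel P1L P2L (c1 l00 c2 α * α / (m : ℝ)) (c2 * α) j ω : ℝ)) ∂ℙ ≤
      c2 * α * ∫ ω, ({ω' | j ∈ R1set sel P1L ω'}.indicator
          (fun ω' => 1 / ((R1set sel P1L ω').card : ℝ)) ω) ∂ℙ +
        (c1 l00 c2 α * α / (m : ℝ)) * (c2 * α) := by
  classical
  set a : ℝ := c1 l00 c2 α * α / (m : ℝ) with ha_def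
  set b : ℝ := c2 * α with hb_def
  obtain ⟨hc20, hc21⟩ := hc2
  obtain ⟨hα0, hα1⟩ := hα
  obtain ⟨hl0, hl1⟩ := hl00
  have hb0 : 0 < b := mul_pos hc20 hα0
  have hb1 : b < 1 := by nlinarith
  have ha0 : 0 ≤ a := by
    have hden : 0 < 1 - l00 * (1 - c2 * α) := by nlinarith
    have hc1nn : 0 ≤ c1 l00 c2 α := div_nonneg (by linarith) hden.le
    have hm0 : (0:ℝ) < m := by exact_mod_cast hm
    exact div_nonneg (mul_nonneg hc1nn hα0.le) hm0.le
  set Y : Ω → (Fin m → ℝ) := fun ω => fun i => P1L i ω with hY_def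
  have hY : Measurable Y := measurable_pi_lambda _ fun i => measP1 i
  set X : Ω → ℝ := P2L j with hX_def
  have hX : Measurable X := measP2 j
  -- partition events
  set ES : Finset (Fin m) → Set Ω := fun S => Y ⁻¹' (sel ⁻¹' {S}) with hES_def
  have hESmeas : ∀ S, MeasurableSet (ES S) :=
    fun S => hY (selMeas MeasurableSpace.measurableSet_top)
  set D : Set Ω := {ω | P1L j ω < 1 - P1L j ω} with hD_def
  have hDmeas : MeasurableSet D :=
    measurableSet_lt (measP1 j) (measurable_const.sub (measP1 j))
  have hDY : D = Y ⁻¹' {p | p j < 1 - p j} := rfl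
  have hDsetmeas : MeasurableSet {p : Fin m → ℝ | p j < 1 - p j} :=
    measurableSet_lt (measurable_pi_apply j) (measurable_const.sub (measurable_pi_apply j))
  -- the claim event
  set C : Set Ω := {ω | Claim sel P1L P2L a b j ω} with hC_def
  have hcardMeas : Measurable (fun ω => ((R1set sel P1L ω).card : ℝ)) := by
    have h1 : @Measurable Ω (Finset (Fin m)) _ ⊤ (fun ω => R1set sel P1L ω) :=
      @Measurable.comp Ω (Fin m → ℝ) (Finset (Fin m)) _ _ ⊤ sel Y selMeas hY
    exact @Measurable.comp Ω (Finset (Fin m)) ℝ _ ⊤ _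
      (fun S : Finset (Fin m) => ((S.card : ℝ))) (fun ω => R1set sel P1L ω)
      (@measurable_from_top (Finset (Fin m)) ℝ _ (fun S => ((S.card : ℝ)))) h1
  have hp2meas : Measurable (p2' P1L P2L j) := by
    exact Measurable.ite hDmeas (measP2 j) (measurable_const.sub (measP2 j))
  have hCmeas : MeasurableSet C := by
    have h1 : MeasurableSet {ω | j ∈ R1set sel P1L ω} := by
      have : {ω | j ∈ R1set sel P1L ω} = Y ⁻¹' (sel ⁻¹' {S | j ∈ S}) := rfl
      rw [this]
      exact hY (selMeas MeasurableSpace.measurableSet_top)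
    have h2 : MeasurableSet {ω | p1' P1L j ω ≤ a} :=
      measurableSet_le ((measP1 j).min (measurable_const.sub (measP1 j))) measurable_const
    have h3 : MeasurableSet {ω | p2' P1L P2L j ω ≤ b / ((R1set sel P1L ω).card : ℝ)} :=
      measurableSet_le hp2meas (measurable_const.div hcardMeas)
    have : C = {ω | j ∈ R1set sel P1L ω} ∩ ({ω | p1' P1L j ω ≤ a} ∩
        {ω | p2' P1L P2L j ω ≤ b / ((R1set sel P1L ω).card : ℝ)}) := by
      ext ω; simp [hC_def, Claim, Set.mem_setOf_eq, Set.mem_inter_iff, and_assoc]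
    rw [this]
    exact h1.inter (h2.inter h3)
  -- LHS equals (ℙ C).toReal
  have hpt : ∀ ω, ((RjL sel P1L P2L a b j ω : ℝ) + (RjR sel P1L P2L a b j ω : ℝ))
      = C.indicator (fun _ => (1:ℝ)) ω := by
    intro ω
    by_cases hcl : Claim sel P1L P2L a b j ω
    · by_cases hd : P1L j ω < 1 - P1L j ω
      · simp [RjL, RjR, hcl, hd, Set.indicator, hC_def]
      · simp [RjL, RjR, hcl, hd, Set.indicator, hC_def]
    · simp [RjL, RjR, hcl, Set.indicator, hC_def]
  have hLHS : ∫ ω, ((RjL sel P1L P2L a b j ω : ℝ) + (RjR sel P1L P2L a b j ω : ℝ)) ∂ℙ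
      = (ℙ C).toReal := by
    simp_rw [hpt]
    rw [MeasureTheory.integral_indicator_const (1:ℝ) hCmeas]
    simp [measureReal_def]
  -- RHS integral as a finite sum
  set F : Finset (Finset (Fin m)) := Finset.univ.filter (fun S => j ∈ S) with hF_def
  have hgpt : ∀ ω, ({ω' | j ∈ R1set sel P1L ω'}.indicator
      (fun ω' => 1 / ((R1set sel P1L ω').card : ℝ)) ω)
      = ∑ S ∈ F, (ES S).indicator (fun _ => 1 / (S.card : ℝ)) ω := by
    intro ω
    have hterm : ∀ S ∈ F, (ES S).indicator (fun _ => 1 / (S.card : ℝ)) ω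
        = if R1set sel P1L ω = S then 1 / (S.card : ℝ) else 0 := by
      intro S _
      simp [Set.indicator, hES_def, R1set, hY_def, Set.mem_preimage, eq_comm]
    rw [Finset.sum_congr rfl hterm, Finset.sum_ite_eq F (R1set sel P1L ω)
      (fun S => 1 / (S.card : ℝ))]
    by_cases hmem : j ∈ R1set sel P1L ω
    · simp [Set.indicator, hmem, hF_def]
    · simp [Set.indicator, hmem, hF_def]
  have hRHSint : ∫ ω, ({ω' | j ∈ R1set sel P1L ω'}.indicator
      (fun ω' => 1 / ((R1set sel P1L ω').card : ℝ)) ω) ∂ℙ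
      = ∑ S ∈ F, (ℙ (ES S)).toReal * (1 / (S.card : ℝ)) := by
    simp_rw [hgpt]
    rw [MeasureTheory.integral_finset_sum F (fun S _ =>
      (MeasureTheory.integrable_const (1 / (S.card : ℝ))).indicator (hESmeas S))]
    refine Finset.sum_congr rfl fun S _ => ?_
    rw [MeasureTheory.integral_indicator_const _ (hESmeas S)]
    simp [smul_eq_mul, measureReal_def]
  -- the key probabilistic bound
  have hkey : ℙ C ≤ ∑ S ∈ F, ENNReal.ofReal (b / (S.card : ℝ)) * ℙ (ES S) := by
    set UL : Finset (Fin m) → Set Ω := fun S =>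
      (X ⁻¹' Iic (b / (S.card : ℝ))) ∩ (ES S ∩ D) with hUL_def
    set UR : Finset (Fin m) → Set Ω := fun S =>
      (X ⁻¹' Ici (1 - b / (S.card : ℝ))) ∩ (ES S ∩ Dᶜ) with hUR_def
    have hsub : C ⊆ ⋃ S ∈ F, (UL S ∪ UR S) := by
      intro ω hω
      obtain ⟨hmem, _, hp2⟩ := hω
      have hS0 : R1set sel P1L ω ∈ F := by simp [hF_def, hmem]
      refine Set.mem_biUnion hS0 ?_
      have hE : ω ∈ ES (R1set sel P1L ω) := by simp [hES_def, R1set, hY_def]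
      by_cases hd : P1L j ω < 1 - P1L j ω
      · left
        refine ⟨?_, hE, hd⟩
        simp only [Set.mem_preimage, Set.mem_Iic]
        simpa [p2', hd, hX_def] using hp2
      · right
        refine ⟨?_, hE, hd⟩
        simp only [Set.mem_preimage, Set.mem_Ici]
        have : 1 - P2L j ω ≤ b / ((R1set sel P1L ω).card : ℝ) := by
          simpa [p2', hd] using hp2
        simp only [hX_def]
        linarith
    calc ℙ C ≤ ℙ (⋃ S ∈ F, (UL S ∪ UR S)) := measure_mono hsub
      _ ≤ ∑ S ∈ F, ℙ (UL S ∪ UR S) := measure_biUnion_finset_le F _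
      _ ≤ ∑ S ∈ F, ENNReal.ofReal (b / (S.card : ℝ)) * ℙ (ES S) := by
          refine Finset.sum_le_sum fun S hS => ?_
          have hjS : j ∈ S := by simpa [hF_def] using hS
          have hcard : (1:ℝ) ≤ (S.card : ℝ) := by
            exact_mod_cast Finset.card_pos.mpr ⟨j, hjS⟩
          have htmem : b / (S.card : ℝ) ∈ Icc (0:ℝ) 1 := by
            constructor
            · positivity
            · calc b / (S.card : ℝ) ≤ b / 1 := by
                    apply div_le_div_of_nonneg_left hb0.le one_pos hcard
                _ ≤ 1 := by rw [div_one]; linarith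
          set t : ℝ := b / (S.card : ℝ)
          -- independence computations
          have hESD : ES S ∩ D = Y ⁻¹' (sel ⁻¹' {S} ∩ {p | p j < 1 - p j}) := by
            rw [Set.preimage_inter]; rfl
          have hESDc : ES S ∩ Dᶜ = Y ⁻¹' (sel ⁻¹' {S} ∩ {p | p j < 1 - p j}ᶜ) := by
            rw [Set.preimage_inter, Set.preimage_compl]; rfl
          have hmeas1 : MeasurableSet (sel ⁻¹' {S} ∩ {p : Fin m → ℝ | p j < 1 - p j}) :=
            (selMeas MeasurableSpace.measurableSet_top).inter hDsetmeas
          have hmeas2 : MeasurableSet (sel ⁻¹' {S} ∩ {p : Fin m → ℝ | p j < 1 - p j}ᶜ) :=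
            (selMeas MeasurableSpace.measurableSet_top).inter hDsetmeas.compl
          have hunif := unif2 j hj.2
          have hIic : ℙ (X ⁻¹' Iic t) = ENNReal.ofReal t := by
            have : X ⁻¹' Iic t = {ω | P2L j ω ≤ t} := rfl
            rw [this]; exact hunif t htmem
          have hIci : ℙ (X ⁻¹' Ici (1 - t)) ≤ ENNReal.ofReal t := by
            have : X ⁻¹' Ici (1 - t) = {ω | 1 - t ≤ P2L j ω} := rfl
            rw [this]
            exact unif_upper_tail (P2L j) (measP2 j) hunif t htmem
          have hULval : ℙ (UL S) = ENNReal.ofReal t * ℙ (ES S ∩ D) := by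
            rw [hUL_def]
            simp only []
            rw [hESD, indep.measure_inter_preimage_eq_mul _ _ measurableSet_Iic hmeas1,
              ← hESD, hIic]
          have hURval : ℙ (UR S) ≤ ENNReal.ofReal t * ℙ (ES S ∩ Dᶜ) := by
            rw [hUR_def]
            simp only []
            rw [hESDc, indep.measure_inter_preimage_eq_mul _ _ measurableSet_Ici hmeas2,
              ← hESDc]
            exact mul_le_mul_left hIci _
          calc ℙ (UL S ∪ UR S) ≤ ℙ (UL S) + ℙ (UR S) := measure_union_le _ _
            _ ≤ ENNReal.ofReal t * ℙ (ES S ∩ D) + ENNReal.ofReal t * ℙ (ES S ∩ Dᶜ) := by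
                rw [hULval]; exact add_le_add_right hURval _
            _ = ENNReal.ofReal t * ℙ (ES S) := by
                rw [← mul_add]
                congr 1
                have h := measure_inter_add_diff (μ := (ℙ : Measure Ω)) (ES S) hDmeas
                rw [Set.diff_eq] at h
                exact h
  -- convert to reals
  have hsumne : ∑ S ∈ F, ENNReal.ofReal (b / (S.card : ℝ)) * ℙ (ES S) ≠ ⊤ := by
    refine (ENNReal.sum_lt_top.mpr fun S _ => ?_).ne
    exact ENNReal.mul_lt_top ENNReal.ofReal_lt_top (measure_lt_top _ _)
  have hreal : (ℙ C).toReal ≤ b * ∑ S ∈ F, (ℙ (ES S)).toReal * (1 / (S.card : ℝ)) := by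
    have h1 := ENNReal.toReal_mono hsumne hkey
    refine h1.trans_eq ?_
    rw [ENNReal.toReal_sum (fun S _ =>
      (ENNReal.mul_lt_top ENNReal.ofReal_lt_top (measure_lt_top _ _)).ne)]
    rw [Finset.mul_sum]
    refine Finset.sum_congr rfl fun S hS => ?_
    have hjS : j ∈ S := by simpa [hF_def] using hS
    have hcard : (0:ℝ) < (S.card : ℝ) := by
      exact_mod_cast Finset.card_pos.mpr ⟨j, hjS⟩
    rw [ENNReal.toReal_mul, ENNReal.toReal_ofReal (by positivity)]
    ring
  rw [hLHS, hRHSint]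
  have hab : 0 ≤ a * b := mul_nonneg ha0 hb0.le
  linarith [hreal]
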